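/- Let Θ be a family of n×r binary supports and Y an n×r complex matrix. Suppose that (1ᵀ, Y) is the unique factorization up to permutation and scaling of Y·1 (the sum of columns of Y) in {1ᵀ} × Σ_Θ, where 1ᵀ is the 1×r all-ones row matrix. Then the column supports supp(Y_1),…,supp(Y_r) of Y are pairwise disjoint. -/

import Mathlib

open Matrix

def IsGenPerm {r : ℕ} (G : Matrix (Fin r) (Fin r) ℂ) : Prop :=
  ∃ (σ : Equiv.Perm (Fin r)) (d : Fin r → ℂ),
    (∀ i, d i ≠ 0) ∧ ∀ i j, G i j = if i = σ j then d i else 0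

def PSEquiv {m n r : ℕ}
    (p q : Matrix (Fin m) (Fin r) ℂ × Matrix (Fin n) (Fin r) ℂ) : Prop :=
  ∃ G, IsGenPerm G ∧ q.1 = p.1 * G ∧ q.2 = p.2 * (G⁻¹)ᵀ

def PSUniqueSet {m n r : ℕ}
    (Sig : Set (Matrix (Fin m) (Fin r) ℂ × Matrix (Fin n) (Fin r) ℂ)) :
    Set (Matrix (Fin m) (Fin r) ℂ × Matrix (Fin n) (Fin r) ℂ) :=
  {p | p ∈ Sig ∧ ∀ q ∈ Sig, q.1 * q.2ᵀ = p.1 * p.2ᵀ → PSEquiv p q}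

/-- The support of a matrix is contained in the (binary) support `S`. -/
def SuppSub {a b : ℕ} (X : Matrix (Fin a) (Fin b) ℂ) (S : Set (Fin a × Fin b)) : Prop :=
  ∀ i j, X i j ≠ 0 → (i, j) ∈ S

/-- The column support of a matrix: indices of its nonzero columns. -/
def Colsupp {a b : ℕ} (X : Matrix (Fin a) (Fin b) ℂ) : Set (Fin b) :=
  {j | ∃ i, X i j ≠ 0}

/-- The column support of a support (set of index pairs). -/
def ColsuppS {a b : ℕ} (S : Set (Fin a × Fin b)) : Set (Fin b) :=
  {j | ∃ i, (i, j) ∈ S}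

/-- The constraint set Σ_Ω associated with a family of pairs of supports. -/
def SigmaOm {m n r : ℕ} (Om : Set (Set (Fin m × Fin r) × Set (Fin n × Fin r))) :
    Set (Matrix (Fin m) (Fin r) ℂ × Matrix (Fin n) (Fin r) ℂ) :=
  {p | ∃ S ∈ Om, SuppSub p.1 S.1 ∧ SuppSub p.2 S.2}

def SigmaTh {n r : ℕ} (Th : Set (Set (Fin n × Fin r))) :
    Set (Matrix (Fin n) (Fin r) ℂ) :=
  {Y | ∃ S ∈ Th, SuppSub Y S}

/-- Perturbation of `Y`: add `t` at `(k,i)` and subtract `t` at `(k,j)`. -/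
def pert {n r : ℕ} (Y : Matrix (Fin n) (Fin r) ℂ) (k : Fin n) (i j : Fin r) (t : ℂ) :
    Matrix (Fin n) (Fin r) ℂ :=
  Matrix.of fun a b =>
    Y a b + (if a = k ∧ b = i then t else 0) + (if a = k ∧ b = j then -t else 0)

theorem stmt19 {n r : ℕ} (Th : Set (Set (Fin n × Fin r)))
    (Y : Matrix (Fin n) (Fin r) ℂ)
    (ones : Matrix (Fin 1) (Fin r) ℂ) (hones : ∀ i j, ones i j = 1)
    (h : (ones, Y) ∈ PSUniqueSet {p | p.1 = ones ∧ p.2 ∈ SigmaTh Th}) :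
    Pairwise (fun i j : Fin r =>
      Disjoint {k : Fin n | Y k i ≠ 0} {k : Fin n | Y k j ≠ 0}) := by
  intro i j hij
  rw [Set.disjoint_left]
  intro k hki hkj
  simp only [Set.mem_setOf_eq] at hki hkj
  exfalso
  obtain ⟨⟨-, S, hSTh, hYS⟩, huniq⟩ := h
  -- key: every perturbation is a column permutation of Y
  have key : ∀ t : ℂ, ∃ σ : Equiv.Perm (Fin r), ∀ a b, pert Y k i j t a b = Y a (σ b) := by
    intro t
    have hsupp : SuppSub (pert Y k i j t) S := by
      intro a b hab
      by_cases h1 : a = k ∧ b = i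
      · rw [h1.1, h1.2]; exact hYS k i hki
      by_cases h2 : a = k ∧ b = j
      · rw [h2.1, h2.2]; exact hYS k j hkj
      · apply hYS a b
        simpa [pert, h1, h2] using hab
    have hmem : (ones, pert Y k i j t) ∈
        {p : Matrix (Fin 1) (Fin r) ℂ × Matrix (Fin n) (Fin r) ℂ |
          p.1 = ones ∧ p.2 ∈ SigmaTh Th} := ⟨rfl, S, hSTh, hsupp⟩
    have hprod : ones * (pert Y k i j t)ᵀ = ones * Yᵀ := by
      ext a b
      simp only [Matrix.mul_apply, Matrix.transpose_apply, hones, one_mul, pert,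
        Matrix.of_apply]
      rw [Finset.sum_add_distrib, Finset.sum_add_distrib]
      by_cases hb : b = k
      · subst hb
        simp [hij.symm, Finset.sum_ite_eq']
      · simp [hb]
    obtain ⟨G, ⟨σ, d, hd, hG⟩, hq1, hq2⟩ := huniq (ones, pert Y k i j t) hmem hprod
    have d_one : ∀ l, d l = 1 := by
      intro l
      have : ones 0 (σ.symm l) = (ones * G) 0 (σ.symm l) := congrFun (congrFun hq1 0) (σ.symm l)
      simp only [Matrix.mul_apply, hones, one_mul, hG] at this
      rw [Finset.sum_ite_eq' Finset.univ (σ (σ.symm l)) d] at this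
      simpa using this.symm
    -- right inverse of G
    set H : Matrix (Fin r) (Fin r) ℂ :=
      Matrix.of (fun a b => if σ a = b then 1 else 0) with hH
    have hGH : G * H = 1 := by
      ext a b
      simp only [Matrix.mul_apply, hG, hH, Matrix.of_apply, Matrix.one_apply, d_one,
        ite_mul, one_mul, zero_mul]
      rw [Fintype.sum_eq_single (σ.symm a)]
      · simp [Equiv.eq_symm_apply, eq_comm]
      · intro m hm
        have : a ≠ σ m := fun h' => hm (by simp [h'])
        simp [this]
    have hGinv : G⁻¹ = H := Matrix.inv_eq_right_inv hGH
    refine ⟨σ, fun a b => ?_⟩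
    have := congrFun (congrFun hq2 a) b
    rw [hGinv] at this
    simp only [Matrix.mul_apply, Matrix.transpose_apply, hH, Matrix.of_apply,
      mul_ite, mul_one, mul_zero] at this
    rwa [Finset.sum_ite_eq Finset.univ (σ b) (Y a), if_pos (Finset.mem_univ _)] at this
  choose f hf using key
  obtain ⟨t, t', htt', hft⟩ := Finite.exists_ne_map_eq_of_infinite f
  have h1 := hf t k i
  have h2 := hf t' k i
  rw [hft] at h1
  have h3 : pert Y k i j t k i = pert Y k i j t' k i := h1.trans h2.symm
  simp [pert, hij] at h3
  exact htt' h3
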